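/- For q an odd prime power, the number of 2-cycles in D(q; m, n) (unordered pairs of distinct vertices u, v with arcs u → v and v → u) equals (1/2)·q·(q−1)·(2 + gcd(m−n, q−1)). -/

import Mathlib

open Finset

/-- The arc relation of the monomial digraph `D(q; m, n)`. -/
def monArc {F : Type*} [Field F] (m n : ℕ) (u v : F × F) : Prop :=
  u.2 + v.2 = u.1 ^ m * v.1 ^ n

open scoped Classical in
/-- Number of solutions of `x^k = 1` with `x ≠ 0` in a finite field. -/
lemma aux_card_roots {F : Type*} [Field F] [Fintype F] (k : ℕ) :
    (univ.filter fun x : F => x ^ k = 1 ∧ x ≠ 0).card = Nat.gcd k (Fintype.card F - 1) := by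
  classical
  set N := Fintype.card F - 1 with hN
  have hcardu : Fintype.card Fˣ = N := Fintype.card_units F
  have hN0 : 0 < N := by
    have := Fintype.one_lt_card (α := F)
    omega
  set d := Nat.gcd k N with hd
  have hd0 : 0 < d := Nat.gcd_pos_of_pos_right _ hN0
  have hdN : d ∣ N := Nat.gcd_dvd_right _ _
  -- a primitive d-th root of unity
  obtain ⟨g, hg⟩ := IsCyclic.exists_generator (α := Fˣ)
  have hog : orderOf g = N := by
    rw [orderOf_eq_card_of_forall_mem_zpowers hg, Nat.card_eq_fintype_card, hcardu]
  have hozeta : orderOf (g ^ (N / d)) = d := by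
    rw [orderOf_pow, hog, Nat.gcd_eq_right (Nat.div_dvd_of_dvd hdN), Nat.div_div_self hdN hN0.ne']
  have hprim : IsPrimitiveRoot ((g ^ (N / d) : Fˣ) : F) d := by
    have := IsPrimitiveRoot.orderOf ((g ^ (N / d) : Fˣ) : F)
    rwa [orderOf_units, hozeta] at this
  have hset : (univ.filter fun x : F => x ^ k = 1 ∧ x ≠ 0) = Polynomial.nthRootsFinset d (1 : F) := by
    ext x
    simp only [mem_filter, mem_univ, true_and, Polynomial.mem_nthRootsFinset hd0]
    constructor
    · rintro ⟨hxk, hx0⟩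
      lift x to Fˣ using isUnit_iff_ne_zero.2 hx0
      have hu : x ^ k = 1 :=
        Units.ext (by rw [Units.val_pow_eq_pow_val, Units.val_one]; exact hxk)
      have hud : x ^ d = 1 := by
        have := pow_gcd_eq_one.2 ⟨hu, (by rw [← Nat.card_eq_fintype_card]; exact pow_card_eq_one' : x ^ Fintype.card Fˣ = 1)⟩
        rwa [hcardu] at this
      rw [← Units.val_pow_eq_pow_val, hud, Units.val_one]
    · intro hxd
      have hx0 : x ≠ 0 := by
        intro h
        rw [h, zero_pow hd0.ne'] at hxd
        exact zero_ne_one hxd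
      refine ⟨?_, hx0⟩
      lift x to Fˣ using isUnit_iff_ne_zero.2 hx0
      have hud : x ^ d = 1 :=
        Units.ext (by rw [Units.val_pow_eq_pow_val, Units.val_one]; exact hxd)
      have hu : x ^ k = 1 := (pow_gcd_eq_one (m := k) (n := Fintype.card Fˣ)).1 (by rw [hcardu]; exact hud) |>.1
      rw [← Units.val_pow_eq_pow_val, hu, Units.val_one]
  rw [hset, hprim.card_nthRootsFinset]

/-- Doubling: ordered pairs vs unordered pairs. -/
lemma aux_sym2 {α : Type*} [Fintype α] (P : α → α → Prop)
    (hsymm : ∀ u v, P u v → P v u) (hirr : ∀ u, ¬ P u u) :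
    Nat.card {p : α × α // P p.1 p.2}
      = 2 * Nat.card {s : Sym2 α // ∃ u v, s = s(u, v) ∧ P u v} := by
  classical
  rw [Nat.card_eq_fintype_card, Nat.card_eq_fintype_card, Fintype.card_subtype,
    Fintype.card_subtype]
  rw [Finset.card_eq_sum_card_fiberwise
    (f := fun p : α × α => (s(p.1, p.2) : Sym2 α))
    (t := univ.filter fun s : Sym2 α => ∃ u v, s = s(u, v) ∧ P u v)
    (fun p hp => by
      simp only [Finset.mem_coe, mem_filter, mem_univ, true_and] at hp ⊢
      exact ⟨p.1, p.2, by simp [Sym2.mk], hp⟩)]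
  rw [Finset.sum_congr rfl (fun s hs => ?_), Finset.sum_const, smul_eq_mul, mul_comm]
  simp only [mem_filter, mem_univ, true_and] at hs
  obtain ⟨u, v, rfl, hP⟩ := hs
  have huv : u ≠ v := fun h => hirr u (h ▸ hP)
  have : ((univ.filter fun p : α × α => P p.1 p.2).filter fun p => s(p.1, p.2) = s(u, v))
      = {(u, v), (v, u)} := by
    ext p
    simp only [mem_filter, mem_univ, true_and, mem_insert, mem_singleton]
    constructor
    · rintro ⟨hp, hmk⟩
      have : s(p.1, p.2) = s(u, v) := hmk
      rw [Sym2.eq_iff] at this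
      rcases this with ⟨h1, h2⟩ | ⟨h1, h2⟩
      · left; exact Prod.ext h1 h2
      · right; exact Prod.ext h1 h2
    · rintro (rfl | rfl)
      · exact ⟨hP, rfl⟩
      · exact ⟨hsymm u v hP, Sym2.eq_swap⟩
  rw [this, Finset.card_insert_of_notMem (by simp [Prod.ext_iff, huv, huv.symm]),
    Finset.card_singleton]

open scoped Classical in
/-- Cardinality of the fiber over a pair of first coordinates. -/
lemma aux_fiber {F : Type*} [Field F] [Fintype F] (q m n : ℕ) (hq : Fintype.card F = q)
    (h2 : (2 : F) ≠ 0) (x y : F) :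
    ((univ.filter fun p : (F × F) × (F × F) =>
        p.1 ≠ p.2 ∧ monArc m n p.1 p.2 ∧ monArc m n p.2 p.1).filter
      fun p => (p.1.1, p.2.1) = (x, y)).card
    = if x = y then q - 1 else if x ^ m * y ^ n = y ^ m * x ^ n then q else 0 := by
  classical
  have hmem : ∀ p : (F × F) × (F × F),
      (p ∈ (univ.filter fun p : (F × F) × (F × F) =>
        p.1 ≠ p.2 ∧ monArc m n p.1 p.2 ∧ monArc m n p.2 p.1).filter
          (fun p => (p.1.1, p.2.1) = (x, y)))
      ↔ (p.1 ≠ p.2 ∧ (p.1.2 + p.2.2 = p.1.1 ^ m * p.2.1 ^ n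
          ∧ p.2.2 + p.1.2 = p.2.1 ^ m * p.1.1 ^ n) ∧ p.1.1 = x ∧ p.2.1 = y) := by
    intro p
    simp only [mem_filter, mem_univ, true_and]; simp only [monArc, Prod.mk.injEq]
    tauto
  by_cases hxy : x = y
  · subst hxy
    rw [if_pos rfl]
    have key : ((univ.filter fun p : (F × F) × (F × F) =>
        p.1 ≠ p.2 ∧ monArc m n p.1 p.2 ∧ monArc m n p.2 p.1).filter
      fun p => (p.1.1, p.2.1) = (x, x)).card
        = (univ.filter fun a : F => 2 * a ≠ x ^ m * x ^ n).card := by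
      apply Finset.card_nbij' (i := fun p => p.1.2)
        (j := fun a => ((x, a), (x, x ^ m * x ^ n - a)))
      · rintro ⟨⟨x1, a⟩, y1, b⟩ hp
        rw [Finset.mem_coe, hmem] at hp
        obtain ⟨hne, ⟨harc1, -⟩, hx1, hy1⟩ := hp
        simp only at hx1 hy1 harc1
        rw [hx1, hy1] at harc1
        rw [Finset.mem_coe, mem_filter]
        refine ⟨mem_univ _, fun h => hne ?_⟩
        simp only at h
        exact Prod.ext_iff.2 ⟨hx1.trans hy1.symm, by linear_combination h - harc1⟩
      · intro a ha
        rw [Finset.mem_coe, mem_filter] at ha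
        rw [Finset.mem_coe, hmem]
        refine ⟨fun h => ha.2 ?_, ⟨by ring, by ring⟩, rfl, rfl⟩
        have := (Prod.ext_iff.1 h).2
        simp only at this
        linear_combination this
      · rintro ⟨⟨x1, a⟩, y1, b⟩ hp
        rw [Finset.mem_coe, hmem] at hp
        obtain ⟨-, ⟨harc1, -⟩, hx1, hy1⟩ := hp
        simp only at hx1 hy1 harc1
        rw [hx1, hy1] at harc1
        exact Prod.ext_iff.2 ⟨Prod.ext_iff.2 ⟨hx1.symm, rfl⟩,
          Prod.ext_iff.2 ⟨hy1.symm, by linear_combination -harc1⟩⟩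
      · intro a _
        rfl
    rw [key]
    have : (univ.filter fun a : F => 2 * a ≠ x ^ m * x ^ n)
        = univ.erase ((x ^ m * x ^ n) / 2) := by
      ext a
      simp only [mem_filter, mem_univ, true_and, mem_erase, ne_eq, and_true]
      rw [eq_div_iff h2, not_iff_not]
      constructor
      · intro h; linear_combination h
      · intro h; linear_combination h
    rw [this, Finset.card_erase_of_mem (mem_univ _), card_univ, hq]
  · rw [if_neg hxy]
    by_cases heq : x ^ m * y ^ n = y ^ m * x ^ n
    · rw [if_pos heq]
      have key : ((univ.filter fun p : (F × F) × (F × F) =>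
          p.1 ≠ p.2 ∧ monArc m n p.1 p.2 ∧ monArc m n p.2 p.1).filter
        fun p => (p.1.1, p.2.1) = (x, y)).card = (univ : Finset F).card := by
        apply Finset.card_nbij' (i := fun p => p.1.2)
          (j := fun a => ((x, a), (y, x ^ m * y ^ n - a)))
        · intro p _; exact mem_univ _
        · intro a _
          rw [Finset.mem_coe, hmem]
          exact ⟨fun h => hxy (Prod.ext_iff.1 h).1, ⟨by ring, by linear_combination heq⟩,
            rfl, rfl⟩
        · rintro ⟨⟨x1, a⟩, y1, b⟩ hp
          rw [Finset.mem_coe, hmem] at hp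
          obtain ⟨-, ⟨harc1, -⟩, hx1, hy1⟩ := hp
          simp only at hx1 hy1 harc1
          rw [hx1, hy1] at harc1
          exact Prod.ext_iff.2 ⟨Prod.ext_iff.2 ⟨hx1.symm, rfl⟩,
            Prod.ext_iff.2 ⟨hy1.symm, by linear_combination -harc1⟩⟩
        · intro a _
          rfl
      rw [key, card_univ, hq]
    · rw [if_neg heq, Finset.card_eq_zero, Finset.eq_empty_iff_forall_notMem]
      intro p hp
      rw [hmem] at hp
      obtain ⟨-, ⟨harc1, harc2⟩, hx1, hy1⟩ := hp
      rw [hx1, hy1] at harc1 harc2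
      exact heq (by linear_combination harc2 - harc1)

lemma aux_iff {F : Type*} [Field F] {m n k : ℕ} (h : m = n + k ∨ n = m + k) (x y : F)
    (hx : x ≠ 0) (hy : y ≠ 0) :
    x ^ m * y ^ n = y ^ m * x ^ n ↔ x ^ k = y ^ k := by
  have hne : (x ^ n * y ^ n : F) ≠ 0 := mul_ne_zero (pow_ne_zero _ hx) (pow_ne_zero _ hy)
  have hne' : (x ^ m * y ^ m : F) ≠ 0 := mul_ne_zero (pow_ne_zero _ hx) (pow_ne_zero _ hy)
  rcases h with h | h
  · rw [h, pow_add, pow_add,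
      show x ^ n * x ^ k * y ^ n = x ^ n * y ^ n * x ^ k from by ring,
      show y ^ n * y ^ k * x ^ n = x ^ n * y ^ n * y ^ k from by ring,
      mul_right_inj' hne]
  · rw [h, pow_add, pow_add,
      show x ^ m * (y ^ m * y ^ k) = x ^ m * y ^ m * y ^ k from by ring,
      show y ^ m * (x ^ m * x ^ k) = x ^ m * y ^ m * x ^ k from by ring,
      mul_right_inj' hne', eq_comm]

open scoped Classical in
lemma aux_eq_count {F : Type*} [Field F] [Fintype F] (q m n : ℕ) (hq : Fintype.card F = q)
    (hm : 1 ≤ m) (hn : 1 ≤ n) :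
    (univ.filter fun z : F × F => z.1 ^ m * z.2 ^ n = z.2 ^ m * z.1 ^ n).card
      = q + ((q - 1) + (q - 1) * Nat.gcd (((m : ℤ) - n).natAbs) (q - 1)) := by
  classical
  set k := ((m : ℤ) - n).natAbs with hk
  set s := univ.filter fun z : F × F => z.1 ^ m * z.2 ^ n = z.2 ^ m * z.1 ^ n with hs
  have hsplit1 := Finset.card_filter_add_card_filter_not
    (s := s) (p := fun z : F × F => z.1 = 0)
  have hA : (s.filter fun z : F × F => z.1 = 0).card = q := by
    have : (s.filter fun z : F × F => z.1 = 0) = univ.filter fun z : F × F => z.1 = 0 := by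
      rw [hs, Finset.filter_filter]
      apply Finset.filter_congr
      intro z _
      simp only [and_iff_right_iff_imp]
      intro h0
      rw [h0, zero_pow (by omega : m ≠ 0), zero_pow (by omega : n ≠ 0), zero_mul, mul_zero]
    rw [this, ← hq, ← card_univ]
    apply Finset.card_nbij' (i := fun z => z.2) (j := fun a => (0, a))
    · intro z _; exact mem_univ _
    · intro a _
      simp only [Finset.mem_coe, mem_filter, mem_univ, true_and]
    · intro z hz
      simp only [Finset.mem_coe, mem_filter, mem_univ, true_and] at hz
      exact Prod.ext_iff.2 ⟨hz.symm, rfl⟩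
    · intro a _; rfl
  have hsplit2 := Finset.card_filter_add_card_filter_not
    (s := s.filter fun z : F × F => ¬z.1 = 0) (p := fun z : F × F => z.2 = 0)
  have hB : ((s.filter fun z : F × F => ¬z.1 = 0).filter fun z : F × F => z.2 = 0).card
      = q - 1 := by
    have : ((s.filter fun z : F × F => ¬z.1 = 0).filter fun z : F × F => z.2 = 0)
        = univ.filter fun z : F × F => ¬z.1 = 0 ∧ z.2 = 0 := by
      rw [hs, Finset.filter_filter, Finset.filter_filter]
      apply Finset.filter_congr
      intro z _
      have himp : z.2 = 0 → z.1 ^ m * z.2 ^ n = z.2 ^ m * z.1 ^ n := by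
        intro h2
        rw [h2, zero_pow (by omega : m ≠ 0), zero_pow (by omega : n ≠ 0), zero_mul, mul_zero]
      tauto
    rw [this, ← hq]
    have h2 : (univ.erase (0 : F)).card = Fintype.card F - 1 := by
      rw [Finset.card_erase_of_mem (mem_univ _), card_univ]
    rw [← h2]
    apply Finset.card_nbij' (i := fun z => z.1) (j := fun a => (a, 0))
    · intro z hz
      simp only [Finset.mem_coe, mem_filter, mem_univ, true_and] at hz
      exact Finset.mem_erase.2 ⟨hz.1, mem_univ _⟩
    · intro a ha
      exact Finset.mem_filter.2 ⟨mem_univ _, (Finset.mem_erase.1 ha).1, rfl⟩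
    · intro z hz
      simp only [Finset.mem_coe, mem_filter, mem_univ, true_and] at hz
      exact Prod.ext_iff.2 ⟨rfl, hz.2.symm⟩
    · intro a _; rfl
  have hC : ((s.filter fun z : F × F => ¬z.1 = 0).filter fun z : F × F => ¬z.2 = 0).card
      = Nat.gcd k (q - 1) * (q - 1) := by
    have hCset : ((s.filter fun z : F × F => ¬z.1 = 0).filter fun z : F × F => ¬z.2 = 0)
        = univ.filter fun z : F × F => (z.1 ^ k = z.2 ^ k ∧ z.1 ≠ 0) ∧ z.2 ≠ 0 := by
      rw [hs, Finset.filter_filter, Finset.filter_filter]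
      apply Finset.filter_congr
      intro z _
      have hcase : m = n + k ∨ n = m + k := by rw [hk]; omega
      constructor
      · intro hh
        have h1 : ¬z.1 = 0 := by tauto
        have h2 : ¬z.2 = 0 := by tauto
        have heq : z.1 ^ m * z.2 ^ n = z.2 ^ m * z.1 ^ n := by tauto
        exact ⟨⟨(aux_iff hcase z.1 z.2 h1 h2).1 heq, h1⟩, h2⟩
      · intro hh
        have h1 : ¬z.1 = 0 := by tauto
        have h2 : ¬z.2 = 0 := by tauto
        have heq : z.1 ^ k = z.2 ^ k := by tauto
        have heq' := (aux_iff hcase z.1 z.2 h1 h2).2 heq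
        tauto
    rw [hCset]
    have hcard : ((univ.filter fun w : F => w ^ k = 1 ∧ w ≠ 0) ×ˢ (univ.erase (0 : F))).card
        = Nat.gcd k (q - 1) * (q - 1) := by
      rw [Finset.card_product, aux_card_roots, hq, Finset.card_erase_of_mem (mem_univ _),
        card_univ, hq]
    rw [← hcard]
    apply Finset.card_nbij' (i := fun z => (z.1 * z.2⁻¹, z.2)) (j := fun w => (w.1 * w.2, w.2))
    · rintro ⟨a, b⟩ hz
      simp only [Finset.mem_coe, mem_filter, mem_univ, true_and] at hz
      obtain ⟨⟨heq, h1⟩, h2⟩ := hz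
      refine Finset.mem_product.2 ⟨Finset.mem_filter.2 ⟨mem_univ _, ?_,
        mul_ne_zero h1 (inv_ne_zero h2)⟩, Finset.mem_erase.2 ⟨h2, mem_univ _⟩⟩
      rw [mul_pow, heq, inv_pow, mul_inv_cancel₀ (pow_ne_zero _ h2)]
    · rintro ⟨a, b⟩ hw
      have h1 := Finset.mem_filter.1 (Finset.mem_product.1 hw).1
      have h2 := Finset.mem_erase.1 (Finset.mem_product.1 hw).2
      refine Finset.mem_filter.2 ⟨mem_univ _, ⟨?_, mul_ne_zero h1.2.2 h2.1⟩, h2.1⟩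
      simp only at h1 h2 ⊢
      rw [mul_pow, h1.2.1, one_mul]
    · rintro ⟨a, b⟩ hz
      simp only [Finset.mem_coe, mem_filter, mem_univ, true_and] at hz
      exact Prod.ext_iff.2 ⟨inv_mul_cancel_right₀ hz.2 a, rfl⟩
    · rintro ⟨a, b⟩ hw
      have h2 := Finset.mem_erase.1 (Finset.mem_product.1 hw).2
      exact Prod.ext_iff.2 ⟨mul_inv_cancel_right₀ h2.1 a, rfl⟩
  rw [Nat.mul_comm] at hC
  rw [hA] at hsplit1
  rw [hB, hC] at hsplit2
  omega

set_option maxHeartbeats 1000000 in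
open scoped Classical in
/-- For `q` odd, the number of 2-cycles (unordered pairs of distinct vertices
with arcs in both directions) of `D(q; m, n)` is
`(1/2) q (q−1) (2 + gcd(m−n, q−1))`. -/
theorem stmt_14 {F : Type*} [Field F] [Fintype F] (q : ℕ) (hq : Fintype.card F = q)
    (hodd : Odd q) (m n : ℕ) (hm : 1 ≤ m ∧ m ≤ q - 1) (hn : 1 ≤ n ∧ n ≤ q - 1) :
    Nat.card {s : Sym2 (F × F) // ∃ u v : F × F,
        s = s(u, v) ∧ u ≠ v ∧ monArc m n u v ∧ monArc m n v u} =
      q * (q - 1) * (2 + Int.gcd ((m : ℤ) - n) (q - 1)) / 2 := by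
  classical
  have hq2 : 2 ≤ q := hq ▸ Fintype.one_lt_card
  have h2 : (2 : F) ≠ 0 := by
    intro h
    have hchar : ringChar F ∣ 2 := (ringChar.spec F 2).1 (by exact_mod_cast h)
    rcases (Nat.dvd_prime Nat.prime_two).1 hchar with h1 | h1
    · exact (one_ne_zero : (1 : F) ≠ 0) (by exact_mod_cast (ringChar.spec F 1).2 (h1 ▸ dvd_refl _))
    · have := FiniteField.even_card_iff_char_two.1 h1
      obtain ⟨r, hr⟩ := hodd
      omega
  have hgcd : Int.gcd ((m : ℤ) - n) ((q : ℤ) - 1) = Nat.gcd (((m : ℤ) - n).natAbs) (q - 1) := by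
    rw [Int.gcd_def]
    congr 1
    omega
  have key : Nat.card {p : (F × F) × (F × F) //
        p.1 ≠ p.2 ∧ monArc m n p.1 p.2 ∧ monArc m n p.2 p.1}
      = 2 * Nat.card {s : Sym2 (F × F) // ∃ u v : F × F,
        s = s(u, v) ∧ u ≠ v ∧ monArc m n u v ∧ monArc m n v u} :=
    aux_sym2 (fun u v : F × F => u ≠ v ∧ monArc m n u v ∧ monArc m n v u)
      (fun u v h => ⟨Ne.symm h.1, h.2.2, h.2.1⟩) (fun u h => h.1 rfl)
  have hT : Nat.card {p : (F × F) × (F × F) //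
        p.1 ≠ p.2 ∧ monArc m n p.1 p.2 ∧ monArc m n p.2 p.1}
      = q * (q - 1) * (2 + Nat.gcd (((m : ℤ) - n).natAbs) (q - 1)) := by
    rw [Nat.card_eq_fintype_card, Fintype.card_subtype]
    rw [Finset.card_eq_sum_card_fiberwise (f := fun p : (F × F) × (F × F) => (p.1.1, p.2.1))
      (t := (univ : Finset (F × F))) (fun p _ => mem_univ _)]
    have hsum : ∀ z : F × F, z ∈ (univ : Finset (F × F)) →
        ((univ.filter fun p : (F × F) × (F × F) =>
          p.1 ≠ p.2 ∧ monArc m n p.1 p.2 ∧ monArc m n p.2 p.1).filter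
            fun p => (p.1.1, p.2.1) = z).card
        = (if z.1 = z.2 then q - 1 else
            if z.1 ^ m * z.2 ^ n = z.2 ^ m * z.1 ^ n then q else 0) :=
      fun z _ => aux_fiber q m n hq h2 z.1 z.2
    rw [Finset.sum_congr rfl hsum, Finset.sum_ite, Finset.sum_const, smul_eq_mul,
      Finset.sum_ite, Finset.sum_const, Finset.sum_const_zero, add_zero, smul_eq_mul]
    have hdiag : (univ.filter fun z : F × F => z.1 = z.2).card = q := by
      rw [← hq, ← card_univ]
      apply Finset.card_nbij' (i := fun z => z.1) (j := fun a => (a, a))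
      · intro z _; exact mem_univ _
      · intro a _; exact Finset.mem_filter.2 ⟨mem_univ _, rfl⟩
      · intro z hz
        exact Prod.ext_iff.2 ⟨rfl, (Finset.mem_filter.1 hz).2⟩
      · intro a _; rfl
    have hcomm : ((univ.filter fun z : F × F => ¬z.1 = z.2).filter
          fun z => z.1 ^ m * z.2 ^ n = z.2 ^ m * z.1 ^ n)
        = ((univ.filter fun z : F × F => z.1 ^ m * z.2 ^ n = z.2 ^ m * z.1 ^ n).filter
          fun z => ¬z.1 = z.2) := Finset.filter_comm _ _ _
    have hdiag_sub : ((univ.filter fun z : F × F =>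
          z.1 ^ m * z.2 ^ n = z.2 ^ m * z.1 ^ n).filter fun z => z.1 = z.2)
        = univ.filter fun z : F × F => z.1 = z.2 := by
      rw [Finset.filter_filter]
      apply Finset.filter_congr
      intro z _
      have himp : z.1 = z.2 → z.1 ^ m * z.2 ^ n = z.2 ^ m * z.1 ^ n := by
        intro h; rw [h, mul_comm]
      tauto
    have hsplit := Finset.card_filter_add_card_filter_not
      (s := univ.filter fun z : F × F => z.1 ^ m * z.2 ^ n = z.2 ^ m * z.1 ^ n)
      (p := fun z : F × F => z.1 = z.2)
    rw [hdiag_sub, hdiag, aux_eq_count q m n hq hm.1 hn.1] at hsplit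
    have hoff : ((univ.filter fun z : F × F => ¬z.1 = z.2).filter
          fun z => z.1 ^ m * z.2 ^ n = z.2 ^ m * z.1 ^ n).card
        = (q - 1) + (q - 1) * Nat.gcd (((m : ℤ) - n).natAbs) (q - 1) := by
      rw [hcomm]
      omega
    rw [hdiag, hoff]
    ring
  rw [hgcd, ← hT, key]
  omega
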